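/- An affine morphism of schemes $f : Y \to X$ is a universal homeomorphism if and only if for every prime number $p$, the base change $f_{\mathbb{Z}_{(p)}} : Y \times_{\operatorname{Spec}\mathbb{Z}} \operatorname{Spec}\mathbb{Z}_{(p)} \to X \times_{\operatorname{Spec}\mathbb{Z}} \operatorname{Spec}\mathbb{Z}_{(p)}$ is a universal homeomorphism. -/

import Mathlib

open AlgebraicGeometry CategoryTheory CategoryTheory.Limits

/-- A morphism of schemes is a universal homeomorphism if every base change of it is a
homeomorphism on underlying topological spaces. -/
def IsUniversalHomeomorphism : MorphismProperty Scheme :=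
  MorphismProperty.universally (topologically @IsHomeomorph)

namespace UHAux

open Topology

noncomputable section

lemma spanPrime (p : ℕ) (hp : p.Prime) : (Ideal.span {(p : ℤ)}).IsPrime :=
  (Ideal.span_singleton_prime (by exact_mod_cast hp.ne_zero)).mpr
    (Nat.prime_iff_prime_int.mp hp)

/-- `Spec ℤ_(p)`. -/
def ZpScheme (p : ℕ) (hp : p.Prime) : Scheme :=
  letI := spanPrime p hp
  Spec (CommRingCat.of (Localization.AtPrime (Ideal.span {(p : ℤ)})))

/-- The canonical map `Spec ℤ_(p) ⟶ Spec ℤ`. -/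
def toSpecZ (p : ℕ) (hp : p.Prime) : ZpScheme p hp ⟶ Spec (CommRingCat.of ℤ) :=
  letI := spanPrime p hp
  Spec.map (CommRingCat.ofHom (algebraMap ℤ (Localization.AtPrime (Ideal.span {(p : ℤ)}))))

instance isPreimmersion_toSpecZ (p : ℕ) (hp : p.Prime) : IsPreimmersion (toSpecZ p hp) := by
  letI := spanPrime p hp
  exact IsPreimmersion.of_isLocalization (Ideal.span {(p : ℤ)}).primeCompl

lemma mem_range_toSpecZ (p : ℕ) (hp : p.Prime) (s : ↑(Spec (CommRingCat.of ℤ))) :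
    s ∈ Set.range (toSpecZ p hp).base ↔
      PrimeSpectrum.asIdeal s ≤ Ideal.span {(p : ℤ)} := by
  letI := spanPrime p hp
  show s ∈ Set.range
      (PrimeSpectrum.comap (algebraMap ℤ (Localization.AtPrime (Ideal.span {(p : ℤ)})))) ↔ _
  rw [PrimeSpectrum.localization_comap_range (Localization.AtPrime (Ideal.span {(p : ℤ)}))
    (Ideal.span {(p : ℤ)}).primeCompl]
  constructor
  · intro hd a ha
    by_contra hnot
    exact Set.disjoint_left.mp hd (show a ∈ (Ideal.span {(p : ℤ)}).primeCompl from hnot) ha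
  · intro hle
    exact Set.disjoint_left.mpr fun a haM haI => haM (hle haI)

lemma exists_mem_range_toSpecZ (s : ↑(Spec (CommRingCat.of ℤ))) :
    ∃ (p : ℕ) (hp : p.Prime), s ∈ Set.range (toSpecZ p hp).base := by
  by_cases h : PrimeSpectrum.asIdeal s = ⊥
  · exact ⟨2, Nat.prime_two, (mem_range_toSpecZ 2 Nat.prime_two s).mpr (by simp [h])⟩
  · haveI : IsPrincipalIdealRing ↑(CommRingCat.of ℤ) := (inferInstance : IsPrincipalIdealRing ℤ)
    haveI : (PrimeSpectrum.asIdeal s).IsPrincipal := IsPrincipalIdealRing.principal _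
    haveI : (PrimeSpectrum.asIdeal s).IsPrime := s.isPrime
    have hg : Prime (Submodule.IsPrincipal.generator (PrimeSpectrum.asIdeal s)) :=
      Submodule.IsPrincipal.prime_generator_of_isPrime _ h
    refine ⟨(Submodule.IsPrincipal.generator (PrimeSpectrum.asIdeal s)).natAbs,
      Int.prime_iff_natAbs_prime.mp hg, (mem_range_toSpecZ _ _ s).mpr ?_⟩
    rw [Int.span_natAbs, Ideal.span_singleton_generator]

lemma mem_range_toSpecZ_of_specializes {p : ℕ} {hp : p.Prime}
    {s₁ s₂ : ↑(Spec (CommRingCat.of ℤ))} (h : s₁ ⤳ s₂)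
    (h₂ : s₂ ∈ Set.range (toSpecZ p hp).base) : s₁ ∈ Set.range (toSpecZ p hp).base := by
  rw [mem_range_toSpecZ] at h₂ ⊢
  exact le_trans ((PrimeSpectrum.le_iff_specializes s₁ s₂).mpr h) h₂

/-- The base change of `f : Y ⟶ X` along `Spec ℤ_(p) ⟶ Spec ℤ`. -/
def Fmap {X Y : Scheme} (f : Y ⟶ X) (p : ℕ) (hp : p.Prime) :
    pullback (specZIsTerminal.from Y) (toSpecZ p hp) ⟶
      pullback (specZIsTerminal.from X) (toSpecZ p hp) :=
  pullback.map _ _ _ _ f (𝟙 _) (𝟙 _) (specZIsTerminal.hom_ext _ _) (by simp)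

lemma Fmap_fst {X Y : Scheme} (f : Y ⟶ X) (p : ℕ) (hp : p.Prime) :
    Fmap f p hp ≫ pullback.fst (specZIsTerminal.from X) (toSpecZ p hp) =
      pullback.fst (specZIsTerminal.from Y) (toSpecZ p hp) ≫ f := by
  simp [Fmap, pullback.map, pullback.lift_fst]

lemma Fmap_fst_apply {X Y : Scheme} (f : Y ⟶ X) (p : ℕ) (hp : p.Prime)
    (t : ↑(pullback (specZIsTerminal.from Y) (toSpecZ p hp))) :
    (pullback.fst (specZIsTerminal.from X) (toSpecZ p hp)).base ((Fmap f p hp).base t) =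
      f.base ((pullback.fst (specZIsTerminal.from Y) (toSpecZ p hp)).base t) := by
  rw [← Scheme.Hom.comp_apply, Fmap_fst, Scheme.Hom.comp_apply]

lemma isPullback_Fmap {X Y : Scheme} (f : Y ⟶ X) (p : ℕ) (hp : p.Prime) :
    IsPullback (Fmap f p hp) (pullback.fst (specZIsTerminal.from Y) (toSpecZ p hp))
      (pullback.fst (specZIsTerminal.from X) (toSpecZ p hp)) f := by
  refine IsPullback.of_right ?_ (Fmap_fst f p hp) (IsPullback.of_hasPullback _ _).flip
  rw [show Fmap f p hp ≫ pullback.snd _ _ = pullback.snd _ _ by simp [Fmap, pullback.map, pullback.lift_snd],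
    show f ≫ specZIsTerminal.from X = specZIsTerminal.from Y from specZIsTerminal.hom_ext _ _]
  exact (IsPullback.of_hasPullback _ _).flip

lemma Fmap_natural {X Y X' Y' : Scheme} {f : Y ⟶ X} {f' : Y' ⟶ X'}
    {i₁ : Y' ⟶ Y} {i₂ : X' ⟶ X} (sq : IsPullback f' i₁ i₂ f) (p : ℕ) (hp : p.Prime) :
    Fmap f' p hp ≫ Fmap i₂ p hp = Fmap i₁ p hp ≫ Fmap f p hp := by
  apply pullback.hom_ext <;> simp [Fmap, sq.w, pullback.map, pullback.lift_fst, pullback.lift_snd, pullback.lift_fst_assoc, pullback.lift_snd_assoc]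

lemma isPullback_Fmap_of_isPullback {X Y X' Y' : Scheme} {f : Y ⟶ X} {f' : Y' ⟶ X'}
    {i₁ : Y' ⟶ Y} {i₂ : X' ⟶ X} (sq : IsPullback f' i₁ i₂ f) (p : ℕ) (hp : p.Prime) :
    IsPullback (Fmap f' p hp) (Fmap i₁ p hp) (Fmap i₂ p hp) (Fmap f p hp) := by
  have s : IsPullback (Fmap f' p hp)
      (Fmap i₁ p hp ≫ pullback.fst (specZIsTerminal.from Y) (toSpecZ p hp))
      (Fmap i₂ p hp ≫ pullback.fst (specZIsTerminal.from X) (toSpecZ p hp)) f := by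
    rw [Fmap_fst, Fmap_fst]
    exact (isPullback_Fmap f' p hp).paste_vert sq
  exact IsPullback.of_bot s (Fmap_natural sq p hp) (isPullback_Fmap f p hp)

/-- The main pointwise extraction lemma. -/
lemma main {X Y : Scheme} (f : Y ⟶ X)
    (H : ∀ (p : ℕ) (hp : p.Prime), IsHomeomorph (Fmap f p hp).base) :
    Function.Bijective f.base ∧ SpecializingMap f.base := by
  have hfrom : ∀ y : Y, (specZIsTerminal.from Y).base y =
      (specZIsTerminal.from X).base (f.base y) := by
    intro y
    have h : specZIsTerminal.from Y = f ≫ specZIsTerminal.from X :=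
      specZIsTerminal.hom_ext _ _
    rw [h, Scheme.Hom.comp_apply]
  -- membership in the range of the projections
  have hrY : ∀ (p : ℕ) (hp : p.Prime) (y : Y),
      (specZIsTerminal.from Y).base y ∈ Set.range (toSpecZ p hp).base →
      y ∈ Set.range (pullback.fst (specZIsTerminal.from Y) (toSpecZ p hp)).base := by
    intro p hp y hy
    rw [Scheme.Pullback.range_fst]
    exact hy
  have hrX : ∀ (p : ℕ) (hp : p.Prime) (x : X),
      (specZIsTerminal.from X).base x ∈ Set.range (toSpecZ p hp).base →
      x ∈ Set.range (pullback.fst (specZIsTerminal.from X) (toSpecZ p hp)).base := by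
    intro p hp x hx
    rw [Scheme.Pullback.range_fst]
    exact hx
  have hembX : ∀ (p : ℕ) (hp : p.Prime),
      IsEmbedding (pullback.fst (specZIsTerminal.from X) (toSpecZ p hp)).base := by
    intro p hp
    haveI : IsPreimmersion (pullback.fst (specZIsTerminal.from X) (toSpecZ p hp)) :=
      inferInstance
    exact Scheme.Hom.isEmbedding _
  refine ⟨⟨?_, ?_⟩, ?_⟩
  · -- injectivity
    intro y₁ y₂ hyy
    obtain ⟨p, hp, hs⟩ := exists_mem_range_toSpecZ ((specZIsTerminal.from Y).base y₁)
    obtain ⟨t₁, ht₁⟩ := hrY p hp y₁ hs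
    obtain ⟨t₂, ht₂⟩ := hrY p hp y₂ (by rw [hfrom, ← hyy, ← hfrom]; exact hs)
    have h₁ : (pullback.fst (specZIsTerminal.from X) (toSpecZ p hp)).base
        ((Fmap f p hp).base t₁) = (pullback.fst (specZIsTerminal.from X) (toSpecZ p hp)).base
        ((Fmap f p hp).base t₂) := by
      rw [Fmap_fst_apply, Fmap_fst_apply, ht₁, ht₂, hyy]
    have h₂ : (Fmap f p hp).base t₁ = (Fmap f p hp).base t₂ := (hembX p hp).injective h₁
    have h₃ : t₁ = t₂ := (H p hp).injective h₂
    rw [← ht₁, ← ht₂, h₃]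
  · -- surjectivity
    intro x
    obtain ⟨p, hp, hs⟩ := exists_mem_range_toSpecZ ((specZIsTerminal.from X).base x)
    obtain ⟨t, ht⟩ := hrX p hp x hs
    obtain ⟨u, hu⟩ := (H p hp).surjective t
    refine ⟨(pullback.fst (specZIsTerminal.from Y) (toSpecZ p hp)).base u, ?_⟩
    rw [← Fmap_fst_apply, hu, ht]
  · -- specializing
    intro y x₂ hspec
    obtain ⟨p, hp, hs₂⟩ := exists_mem_range_toSpecZ ((specZIsTerminal.from X).base x₂)
    have hs₁ : (specZIsTerminal.from Y).base y ∈ Set.range (toSpecZ p hp).base := by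
      rw [hfrom]
      exact mem_range_toSpecZ_of_specializes
        (hspec.map (specZIsTerminal.from X).continuous) hs₂
    obtain ⟨t, ht⟩ := hrY p hp y hs₁
    obtain ⟨u₂, hu₂⟩ := hrX p hp x₂ hs₂
    have hsp : (pullback.fst (specZIsTerminal.from X) (toSpecZ p hp)).base
        ((Fmap f p hp).base t) ⤳
        (pullback.fst (specZIsTerminal.from X) (toSpecZ p hp)).base u₂ := by
      rw [Fmap_fst_apply, ht, hu₂]
      exact hspec
    have h₁ : (Fmap f p hp).base t ⤳ u₂ :=
      ((hembX p hp).isInducing.specializes_iff).mp hsp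
    obtain ⟨e, he⟩ := isHomeomorph_iff_exists_homeomorph.mp (H p hp)
    have h₂ : t ⤳ e.symm u₂ := by
      rw [← e.isInducing.specializes_iff]
      rw [e.apply_symm_apply]
      rw [show e t = (Fmap f p hp).base t from congrFun he t]
      exact h₁
    refine ⟨(pullback.fst (specZIsTerminal.from Y) (toSpecZ p hp)).base (e.symm u₂), ?_, ?_⟩
    · rw [← ht]
      exact h₂.map (pullback.fst (specZIsTerminal.from Y) (toSpecZ p hp)).continuous
    rw [← Fmap_fst_apply, show (Fmap f p hp).base (e.symm u₂) = e (e.symm u₂) from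
      (congrFun he _).symm, e.apply_symm_apply, hu₂]

lemma homeo_of_IUH {X Y : Scheme} {f : Y ⟶ X} (h : IsUniversalHomeomorphism f) :
    IsHomeomorph f.base :=
  MorphismProperty.universally_le _ _ h

/-- The key reverse direction. -/
lemma reverse {X Y : Scheme} (f : Y ⟶ X) [QuasiCompact f]
    (H : ∀ (p : ℕ) (hp : p.Prime), IsUniversalHomeomorphism (Fmap f p hp)) :
    IsUniversalHomeomorphism f := by
  have key : ∀ ⦃X' Y' : Scheme⦄ (i₁ : Y' ⟶ Y) (i₂ : X' ⟶ X) (f' : Y' ⟶ X')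
      (sq : IsPullback f' i₁ i₂ f),
      Function.Bijective f'.base ∧ SpecializingMap f'.base := by
    intro X' Y' i₁ i₂ f' sq
    refine main f' (fun p hp => ?_)
    have hIUH : IsUniversalHomeomorphism (Fmap f' p hp) := by
      intro A B j₁ j₂ g sq'
      exact H p hp (j₁ ≫ Fmap i₁ p hp) (j₂ ≫ Fmap i₂ p hp) g
        (sq'.paste_vert (isPullback_Fmap_of_isPullback sq p hp))
    exact homeo_of_IUH hIUH
  have huc : UniversallyClosed f := by
    have hsp : (AlgebraicGeometry.topologically @SpecializingMap).universally f := by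
      intro A B j₁ j₂ g sq'
      exact (key j₁ j₂ g sq').2
    rw [universallyClosed_eq_universallySpecializing]
    exact ⟨hsp, inferInstance⟩
  intro X' Y' i₁ i₂ f' sq
  rw [AlgebraicGeometry.topologically, isHomeomorph_iff_continuous_isClosedMap_bijective]
  exact ⟨f'.continuous, huc.out i₁ i₂ f' sq, (key i₁ i₂ f' sq).1⟩

end

end UHAux

/-- An affine morphism of schemes `f : Y ⟶ X` is a universal homeomorphism if and only if
for every prime number `p` the base change of `f` along `Spec ℤ_(p) ⟶ Spec ℤ` is a
universal homeomorphism. -/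
theorem stmt_11 {X Y : Scheme} (f : Y ⟶ X) (haff : IsAffineHom f) :
    IsUniversalHomeomorphism f ↔
      ∀ (p : ℕ) (hp : p.Prime),
        letI : (Ideal.span {(p : ℤ)}).IsPrime :=
          (Ideal.span_singleton_prime (by exact_mod_cast hp.ne_zero)).mpr
            (Nat.prime_iff_prime_int.mp hp)
        IsUniversalHomeomorphism
          (pullback.map (specZIsTerminal.from Y)
            (Spec.map (CommRingCat.ofHom
              (algebraMap ℤ (Localization.AtPrime (Ideal.span {(p : ℤ)})))))
            (specZIsTerminal.from X)
            (Spec.map (CommRingCat.ofHom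
              (algebraMap ℤ (Localization.AtPrime (Ideal.span {(p : ℤ)})))))
            f (𝟙 _) (𝟙 _) (specZIsTerminal.hom_ext _ _) (by simp)) := by
  constructor
  · intro hf p hp
    have h : IsUniversalHomeomorphism (UHAux.Fmap f p hp) := by
      intro A B j₁ j₂ g sq'
      exact hf (j₁ ≫ pullback.fst _ _) (j₂ ≫ pullback.fst _ _) g
        (sq'.paste_vert (UHAux.isPullback_Fmap f p hp))
    exact h
  · intro H
    haveI := haff
    exact UHAux.reverse f (fun p hp => H p hp)
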